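/- The value of (Mathlib's) Riemann zeta function at s = 1 equals (γ − log(4π))/2, where γ is the Euler–Mascheroni constant; in particular ζ(1) ≠ 0. -/
import Mathlib

open Real

theorem riemannZeta_one_value :
    riemannZeta 1 = ((Real.eulerMascheroniConstant : ℂ) - Complex.log (4 * π)) / 2 ∧
      riemannZeta 1 ≠ 0 := by
  exact ⟨riemannZeta_one, riemannZeta_one_ne_zero⟩
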